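/- Let $(Z,\omega)$ be a deformation datum over a smooth projective curve $X$ of genus $g_X$ over an algebraically closed field $k$ of characteristic $p$, with critical points $(\tau_j)_{j\in J}$ and invariants $\sigma_j = h_j/m_j$. Then $\sum_{j\in J} (\sigma_j - 1) = 2g_X - 2$. -/

import Mathlib

/-!
Statement 0. Local vanishing cycle formula for a deformation datum `(Z, ω)` over a smooth
projective curve `X` of genus `g_X` in characteristic `p`: the critical points `τ_j` (`j ∈ J`)
with invariants `σ_j = h_j / m_j` satisfy `∑_j (σ_j - 1) = 2 g_X - 2`.

We encode the deformation datum combinatorially, following the derivation sanctioned by the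
context: `H` is the order of the Galois group of `Z → X`, above each critical point `τ_j`
there are `n j` points, each with stabilizer of order `m j` (so `H = m j * n j`),
`ord_ξ(ω) = h j - 1` at each such point, the divisor of `ω` has degree `2 g_Z - 2`, and the
Riemann–Hurwitz formula holds for the tame cover `Z → X`.
-/

theorem deformation_datum_local_vanishing_cycle_formula
    (J : Type*) [Fintype J] (m n : J → ℕ) (h : J → ℤ)
    (H : ℕ) (gX gZ : ℤ)
    (hH : 0 < H)
    (hm : ∀ j, 0 < m j) (hn : ∀ j, 0 < n j)
    -- orbit-stabilizer for the fiber over each critical point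
    (horbit : ∀ j, H = m j * n j)
    -- the divisor of the differential ω has degree 2 g_Z - 2
    (hdeg : ∑ j, (n j : ℤ) * (h j - 1) = 2 * gZ - 2)
    -- Riemann–Hurwitz for the tame Galois cover Z → X of degree H
    (hRH : 2 * gZ - 2 = (H : ℤ) * (2 * gX - 2) + ∑ j, (n j : ℤ) * ((m j : ℤ) - 1)) :
    ∑ j, ((h j : ℚ) / (m j : ℚ) - 1) = 2 * (gX : ℚ) - 2 := by
  have hHQ : (H : ℚ) ≠ 0 := Nat.cast_ne_zero.mpr hH.ne'
  have key : ∀ j, ((h j : ℚ) / (m j : ℚ) - 1)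
      = ((n j : ℚ) * ((h j : ℚ) - 1) - (n j : ℚ) * ((m j : ℚ) - 1)) / (H : ℚ) := by
    intro j
    have hmj : ((m j : ℚ)) ≠ 0 := Nat.cast_ne_zero.mpr (hm j).ne'
    have ho : (H : ℚ) = (m j : ℚ) * (n j : ℚ) := by exact_mod_cast congrArg Nat.cast (horbit j)
    rw [ho]
    have hnj : ((n j : ℚ)) ≠ 0 := Nat.cast_ne_zero.mpr (hn j).ne'
    field_simp
    ring
  calc ∑ j, ((h j : ℚ) / (m j : ℚ) - 1)
      = (∑ j, ((n j : ℚ) * ((h j : ℚ) - 1)) - ∑ j, (n j : ℚ) * ((m j : ℚ) - 1)) / (H : ℚ) := by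
        rw [Finset.sum_congr rfl fun j _ => key j, ← Finset.sum_div, ← Finset.sum_sub_distrib]
    _ = 2 * (gX : ℚ) - 2 := by
        have h1 : (∑ j, ((n j : ℚ) * ((h j : ℚ) - 1))) = 2 * (gZ : ℚ) - 2 := by
          exact_mod_cast congrArg (Int.cast : ℤ → ℚ) hdeg
        have h2 : (2 * (gZ : ℚ) - 2) = (H : ℚ) * (2 * (gX : ℚ) - 2) + ∑ j, (n j : ℚ) * ((m j : ℚ) - 1) := by
          exact_mod_cast congrArg (Int.cast : ℤ → ℚ) hRH
        rw [h1, h2]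
        field_simp
        ring
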